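/- Fix k ∈ ℕ and the gauge ‖·‖ of K = conv{(1,1),(-1,0),(0,-1)} on ℤ². Among all sets T ⊂ ℤ² \ {0} of cardinality k with no two elements positive multiples of each other, the sum ∑_{v∈T} ‖v‖ is minimized if and only if T is saturated, i.e., every v ∈ T is primitive and whenever w ∈ ℤ² is primitive with ‖w‖ < ‖v‖ for some v ∈ T, then w ∈ T. -/

import Mathlib

noncomputable def gaugeZ (v : ℤ × ℤ) : ℝ :=
  gauge (convexHull ℝ {((1:ℝ),(1:ℝ)), (-1,0), (0,-1)}) ((v.1 : ℝ), (v.2 : ℝ))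

/-- A vector configuration: a finite set of nonzero lattice vectors, no two of which lie on a
common ray (are positive multiples of each other). -/
def IsVectorConfig (T : Finset (ℤ × ℤ)) : Prop :=
  (0 : ℤ × ℤ) ∉ T ∧ ∀ v ∈ T, ∀ w ∈ T, v ≠ w → ¬∃ a b : ℕ, 0 < a ∧ 0 < b ∧ a • v = b • w

/-- A saturated set: all members are primitive, and it contains every primitive vector of
strictly smaller gauge norm than some member. -/
def IsSaturated (T : Finset (ℤ × ℤ)) : Prop :=
  (∀ v ∈ T, Int.gcd v.1 v.2 = 1) ∧
    ∀ w : ℤ × ℤ, Int.gcd w.1 w.2 = 1 → (∃ v ∈ T, gaugeZ w < gaugeZ v) → w ∈ T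

open Set


def g3 (v : ℤ × ℤ) : ℤ := max (max (2*v.2 - v.1) (2*v.1 - v.2)) (-v.1 - v.2)

lemma g3_nonneg (v : ℤ × ℤ) : 0 ≤ g3 v := by simp only [g3]; omega

lemma g3_pos {v : ℤ × ℤ} (hv : v ≠ 0) : 1 ≤ g3 v := by
  have : ¬(v.1 = 0 ∧ v.2 = 0) := by
    intro ⟨h1, h2⟩; exact hv (Prod.ext h1 h2)
  simp only [g3]; omega

lemma g3_smul (n : ℕ) (v : ℤ × ℤ) : g3 (n • v) = n * g3 v := by
  simp only [g3, Prod.smul_fst, Prod.smul_snd]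
  simp only [nsmul_eq_mul]
  rw [show 2*((n:ℤ)*v.2) - (n:ℤ)*v.1 = (n:ℤ)*(2*v.2 - v.1) by ring,
    show 2*((n:ℤ)*v.1) - (n:ℤ)*v.2 = (n:ℤ)*(2*v.1 - v.2) by ring,
    show -((n:ℤ)*v.1) - (n:ℤ)*v.2 = (n:ℤ)*(-v.1 - v.2) by ring,
    ← mul_max_of_nonneg _ _ (by positivity : (0:ℤ) ≤ (n:ℤ)),
    ← mul_max_of_nonneg _ _ (by positivity : (0:ℤ) ≤ (n:ℤ))]

def prim (v : ℤ × ℤ) : ℤ × ℤ := (v.1 / (Int.gcd v.1 v.2 : ℤ), v.2 / (Int.gcd v.1 v.2 : ℤ))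

lemma gcd_pos {v : ℤ × ℤ} (hv : v ≠ 0) : 0 < Int.gcd v.1 v.2 := by
  rcases Nat.eq_zero_or_pos (Int.gcd v.1 v.2) with h | h
  · obtain ⟨h1, h2⟩ := Int.gcd_eq_zero_iff.mp h
    exact absurd (Prod.ext h1 h2) hv
  · exact h

lemma prim_gcd {v : ℤ × ℤ} (hv : v ≠ 0) : Int.gcd (prim v).1 (prim v).2 = 1 :=
  Int.gcd_div_gcd_div_gcd (gcd_pos hv)

lemma prim_spec {v : ℤ × ℤ} (hv : v ≠ 0) : (Int.gcd v.1 v.2) • prim v = v := by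
  have h1 : ((Int.gcd v.1 v.2 : ℤ)) ∣ v.1 := Int.gcd_dvd_left _ _
  have h2 : ((Int.gcd v.1 v.2 : ℤ)) ∣ v.2 := Int.gcd_dvd_right _ _
  apply Prod.ext
  · simp only [prim, Prod.smul_fst]
    simp only [nsmul_eq_mul]
    exact Int.mul_ediv_cancel' h1
  · simp only [prim, Prod.smul_snd]
    simp only [nsmul_eq_mul]
    exact Int.mul_ediv_cancel' h2

lemma prim_ne_zero {v : ℤ × ℤ} (hv : v ≠ 0) : prim v ≠ 0 := by
  intro h
  have := prim_spec hv
  rw [h, smul_zero] at this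
  exact hv this.symm

lemma ne_zero_of_primitive {v : ℤ × ℤ} (h : Int.gcd v.1 v.2 = 1) : v ≠ 0 := by
  intro h0; subst h0; simp at h

lemma prim_of_primitive {v : ℤ × ℤ} (h : Int.gcd v.1 v.2 = 1) : prim v = v := by
  simp [prim, h]

lemma primitive_smul_inj {p q : ℤ × ℤ} (hp : Int.gcd p.1 p.2 = 1) (hq : Int.gcd q.1 q.2 = 1)
    {m n : ℕ} (hm : 0 < m) (hn : 0 < n) (h : m • p = n • q) : p = q := by
  have h1 : (m:ℤ) * p.1 = (n:ℤ) * q.1 := by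
    have := congrArg Prod.fst h; simpa [nsmul_eq_mul] using this
  have h2 : (m:ℤ) * p.2 = (n:ℤ) * q.2 := by
    have := congrArg Prod.snd h; simpa [nsmul_eq_mul] using this
  have hmn : m = n := by
    have e1 : Int.gcd ((m:ℤ) * p.1) ((m:ℤ) * p.2) = m * Int.gcd p.1 p.2 := by
      rw [Int.gcd_mul_left]; simp
    have e2 : Int.gcd ((n:ℤ) * q.1) ((n:ℤ) * q.2) = n * Int.gcd q.1 q.2 := by
      rw [Int.gcd_mul_left]; simp
    rw [h1, h2, e2, hq] at e1
    rw [hp] at e1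
    omega
  subst hmn
  have hm' : (m:ℤ) ≠ 0 := by exact_mod_cast hm.ne'
  exact Prod.ext (mul_left_cancel₀ hm' h1) (mul_left_cancel₀ hm' h2)

lemma sameRay_iff {v w : ℤ × ℤ} (hv : v ≠ 0) (hw : w ≠ 0) :
    (∃ a b : ℕ, 0 < a ∧ 0 < b ∧ a • v = b • w) ↔ prim v = prim w := by
  constructor
  · rintro ⟨a, b, ha, hb, hab⟩
    have e1 : (a * Int.gcd v.1 v.2) • prim v = a • v := by
      rw [mul_smul, prim_spec hv]
    have e2 : (b * Int.gcd w.1 w.2) • prim w = b • w := by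
      rw [mul_smul, prim_spec hw]
    exact primitive_smul_inj (prim_gcd hv) (prim_gcd hw)
      (Nat.mul_pos ha (gcd_pos hv)) (Nat.mul_pos hb (gcd_pos hw))
      (by rw [e1, e2, hab])
  · intro h
    refine ⟨Int.gcd w.1 w.2, Int.gcd v.1 v.2, gcd_pos hw, gcd_pos hv, ?_⟩
    calc (Int.gcd w.1 w.2) • v = (Int.gcd w.1 w.2) • ((Int.gcd v.1 v.2) • prim v) := by
          rw [prim_spec hv]
      _ = (Int.gcd v.1 v.2) • ((Int.gcd w.1 w.2) • prim w) := by
          rw [h, smul_comm]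
      _ = (Int.gcd v.1 v.2) • w := by rw [prim_spec hw]

lemma g3_eq_mul_prim {v : ℤ × ℤ} (hv : v ≠ 0) :
    g3 v = (Int.gcd v.1 v.2 : ℤ) * g3 (prim v) := by
  conv_lhs => rw [← prim_spec hv]
  rw [g3_smul]

lemma g3_prim_le {v : ℤ × ℤ} (hv : v ≠ 0) : g3 (prim v) ≤ g3 v := by
  rw [g3_eq_mul_prim hv]
  have h1 : (1:ℤ) ≤ (Int.gcd v.1 v.2 : ℤ) := by exact_mod_cast gcd_pos hv
  exact le_mul_of_one_le_left (g3_nonneg _) h1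

lemma g3_prim_lt {v : ℤ × ℤ} (hv : v ≠ 0) (hnp : Int.gcd v.1 v.2 ≠ 1) :
    g3 (prim v) < g3 v := by
  rw [g3_eq_mul_prim hv]
  have h2 : (2:ℤ) ≤ (Int.gcd v.1 v.2 : ℤ) := by
    have := gcd_pos hv; omega
  have := g3_pos (prim_ne_zero hv)
  nlinarith

lemma hull_eq :
    convexHull ℝ {((1:ℝ),(1:ℝ)), (-1,0), (0,-1)} =
      {p : ℝ × ℝ | 2*p.2 - p.1 ≤ 1 ∧ 2*p.1 - p.2 ≤ 1 ∧ -p.1 - p.2 ≤ 1} := by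
  apply le_antisymm
  · apply convexHull_min
    · intro p hp
      simp only [Set.mem_insert_iff, Set.mem_singleton_iff] at hp
      rcases hp with h|h|h <;> subst h <;> norm_num
    · intro x hx y hy a b ha hb hab
      simp only [Set.mem_setOf_eq, Prod.smul_fst, Prod.smul_snd, Prod.fst_add, Prod.snd_add,
        smul_eq_mul] at *
      obtain ⟨h1,h2,h3⟩ := hx; obtain ⟨g1,g2,g3⟩ := hy
      refine ⟨?_, ?_, ?_⟩ <;> nlinarith
  · intro p hp
    simp only [Set.mem_setOf_eq] at hp
    obtain ⟨h1,h2,h3⟩ := hp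
    have := Finset.centerMass_mem_convexHull (Finset.univ : Finset (Fin 3))
      (w := ![ (1+p.1+p.2)/3, (1-2*p.1+p.2)/3, (1+p.1-2*p.2)/3 ])
      (z := ![((1:ℝ),(1:ℝ)), (-1,0), (0,-1)]) (s := {((1:ℝ),(1:ℝ)), (-1,0), (0,-1)})
      (by intro i _; fin_cases i <;> simp <;> linarith)
      (by simp [Fin.sum_univ_three]; ring_nf; norm_num)
      (by intro i _; fin_cases i <;> simp [Set.mem_insert_iff])
    convert this using 1
    rw [Finset.centerMass]
    simp [Fin.sum_univ_three]
    rw [show (1+p.1+p.2)/3 + (1-2*p.1+p.2)/3 + (1+p.1-2*p.2)/3 = 1 by ring]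
    rw [inv_one]
    ext <;> simp [Prod.smul_fst, Prod.smul_snd] <;> ring

lemma gaugeZ_eq (v : ℤ × ℤ) : gaugeZ v = (g3 v : ℝ) := by
  by_cases hv : v = 0
  · subst hv
    have : ((0:ℝ), (0:ℝ)) = (0 : ℝ × ℝ) := rfl
    simp [gaugeZ, g3, this, gauge_zero]
  · have hm : (0:ℝ) < (g3 v : ℝ) := by exact_mod_cast g3_pos hv
    have hcast : (g3 v : ℝ) = max (max (2*(v.2:ℝ) - v.1) (2*(v.1:ℝ) - v.2)) (-(v.1:ℝ) - v.2) := by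
      simp only [g3]; push_cast; ring_nf
    rw [gaugeZ, hull_eq, gauge_def']
    have hset : {r ∈ Set.Ioi (0:ℝ) | r⁻¹ • (((v.1:ℝ), (v.2:ℝ)) : ℝ × ℝ) ∈
        {p : ℝ × ℝ | 2*p.2 - p.1 ≤ 1 ∧ 2*p.1 - p.2 ≤ 1 ∧ -p.1 - p.2 ≤ 1}} =
        Set.Ici ((g3 v : ℝ)) := by
      ext r
      simp only [Set.mem_setOf_eq, Set.mem_sep_iff, Set.mem_Ioi, Set.mem_Ici, Prod.smul_fst,
        Prod.smul_snd, smul_eq_mul]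
      constructor
      · rintro ⟨hr, h1, h2, h3⟩
        rw [hcast]
        have key : ∀ a : ℝ, r⁻¹ * a ≤ 1 → a ≤ r := fun a h => (inv_mul_le_one₀ hr).mp h
        refine max_le (max_le ?_ ?_) ?_
        · exact key _ (by ring_nf; ring_nf at h1; linarith)
        · exact key _ (by ring_nf; ring_nf at h2; linarith)
        · exact key _ (by ring_nf; ring_nf at h3; linarith)
      · intro h
        rw [hcast] at h
        have hr : 0 < r := lt_of_lt_of_le (by rw [← hcast]; exact hm) h
        obtain ⟨h12, h3⟩ := max_le_iff.mp h
        obtain ⟨h1, h2⟩ := max_le_iff.mp h12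
        have key : ∀ a : ℝ, a ≤ r → r⁻¹ * a ≤ 1 := fun a h => (inv_mul_le_one₀ hr).mpr h
        refine ⟨hr, ?_, ?_, ?_⟩
        · have := key _ h1; ring_nf; ring_nf at this; linarith
        · have := key _ h2; ring_nf; ring_nf at this; linarith
        · have := key _ h3; ring_nf; ring_nf at this; linarith
    rw [hset, csInf_Ici]

lemma sum_gaugeZ (S : Finset (ℤ × ℤ)) : ∑ v ∈ S, gaugeZ v = ((∑ v ∈ S, g3 v : ℤ) : ℝ) := by
  push_cast
  exact Finset.sum_congr rfl fun v _ => gaugeZ_eq v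

/-- Replacing `v ∈ T` by a new vector `w` of strictly smaller `g3` contradicts minimality. -/
lemma exchange {k : ℕ} {T : Finset (ℤ × ℤ)} (hT : IsVectorConfig T) (hcard : T.card = k)
    (hmin : ∀ U : Finset (ℤ × ℤ), IsVectorConfig U → U.card = k →
        ∑ v ∈ T, gaugeZ v ≤ ∑ v ∈ U, gaugeZ v)
    {v w : ℤ × ℤ} (hv : v ∈ T) (hw : w ∉ T) (hw0 : w ≠ 0)
    (hray : ∀ y ∈ T, y ≠ v → ¬ prim w = prim y)
    (hlt : g3 w < g3 v) : False := by
  have hwe : w ∉ T.erase v := fun h => hw (Finset.mem_of_mem_erase h)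
  set U := insert w (T.erase v) with hUdef
  have hy0 : ∀ y ∈ T, y ≠ (0 : ℤ × ℤ) := fun y hy h => hT.1 (h ▸ hy)
  have hUcard : U.card = k := by
    rw [hUdef, Finset.card_insert_of_notMem hwe, Finset.card_erase_of_mem hv, hcard]
    have : 1 ≤ k := by rw [← hcard]; exact Finset.card_pos.mpr ⟨v, hv⟩
    omega
  have hU : IsVectorConfig U := by
    constructor
    · intro h0
      rcases Finset.mem_insert.mp h0 with h | h
      · exact hw0 h.symm
      · exact hT.1 (Finset.mem_of_mem_erase h)
    · intro x hx y hy hxy hex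
      rcases Finset.mem_insert.mp hx with hx' | hx' <;>
        rcases Finset.mem_insert.mp hy with hy' | hy'
      · exact hxy (hx'.trans hy'.symm)
      · have hyT := Finset.mem_of_mem_erase hy'
        have hyv := Finset.ne_of_mem_erase hy'
        rw [hx'] at hex
        exact hray y hyT hyv ((sameRay_iff hw0 (hy0 y hyT)).mp hex)
      · have hxT := Finset.mem_of_mem_erase hx'
        have hxv := Finset.ne_of_mem_erase hx'
        rw [hy'] at hex
        have : prim x = prim w := (sameRay_iff (hy0 x hxT) hw0).mp hex
        exact hray x hxT hxv this.symm
      · exact hT.2 x (Finset.mem_of_mem_erase hx') y (Finset.mem_of_mem_erase hy') hxy hex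
  have hsum : ∑ u ∈ U, g3 u < ∑ u ∈ T, g3 u := by
    rw [hUdef, Finset.sum_insert hwe, ← Finset.add_sum_erase T g3 hv]
    omega
  have := hmin U hU hUcard
  rw [sum_gaugeZ, sum_gaugeZ] at this
  exact absurd (Int.cast_le.mp this) (not_le.mpr hsum)

theorem stmt9 (k : ℕ) (T : Finset (ℤ × ℤ)) (hT : IsVectorConfig T) (hcard : T.card = k) :
    (∀ U : Finset (ℤ × ℤ), IsVectorConfig U → U.card = k →
        ∑ v ∈ T, gaugeZ v ≤ ∑ v ∈ U, gaugeZ v) ↔ IsSaturated T := by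
  have hy0 : ∀ y ∈ T, y ≠ (0 : ℤ × ℤ) := fun y hy h => hT.1 (h ▸ hy)
  constructor
  · intro hmin
    have h1 : ∀ v ∈ T, Int.gcd v.1 v.2 = 1 := by
      intro v hv
      by_contra hnp
      have hv0 : v ≠ 0 := hy0 v hv
      have hwT : prim v ∉ T := by
        intro hwmem
        have hne : v ≠ prim v := by
          intro h
          exact hnp (h ▸ prim_gcd hv0)
        exact hT.2 v hv (prim v) hwmem hne
          ⟨1, Int.gcd v.1 v.2, one_pos, gcd_pos hv0, by rw [one_smul, prim_spec hv0]⟩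
      refine exchange hT hcard hmin hv hwT (prim_ne_zero hv0) ?_ (g3_prim_lt hv0 hnp)
      intro y hy hyv h
      rw [prim_of_primitive (prim_gcd hv0)] at h
      exact hT.2 v hv y hy (fun he => hyv he.symm)
        ((sameRay_iff hv0 (hy0 y hy)).mpr h)
    refine ⟨h1, ?_⟩
    intro w hwprim hex
    by_contra hwT
    obtain ⟨v, hv, hlt⟩ := hex
    rw [gaugeZ_eq, gaugeZ_eq] at hlt
    have hlt' : g3 w < g3 v := Int.cast_lt.mp hlt
    have hw0 : w ≠ 0 := ne_zero_of_primitive hwprim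
    refine exchange hT hcard hmin hv hwT hw0 ?_ hlt'
    intro y hy _ h
    rw [prim_of_primitive hwprim, prim_of_primitive (h1 y hy)] at h
    exact hwT (h ▸ hy)
  · intro hsat U hU hUk
    rw [sum_gaugeZ, sum_gaugeZ]
    have hu0 : ∀ u ∈ U, u ≠ (0 : ℤ × ℤ) := fun u hu h => hU.1 (h ▸ hu)
    apply Int.cast_le.mpr
    set V := U.image prim with hVdef
    have hinj : ∀ x ∈ U, ∀ y ∈ U, prim x = prim y → x = y := by
      intro x hx y hy h
      by_contra hne
      exact hU.2 x hx y hy hne ((sameRay_iff (hu0 x hx) (hu0 y hy)).mpr h)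
    have hVcard : V.card = k := by
      rw [hVdef, Finset.card_image_of_injOn (fun x hx y hy => hinj x hx y hy), hUk]
    have hVprim : ∀ x ∈ V, Int.gcd x.1 x.2 = 1 := by
      intro x hx
      obtain ⟨u, hu, rfl⟩ := Finset.mem_image.mp hx
      exact prim_gcd (hu0 u hu)
    have hUV : ∑ x ∈ V, g3 x ≤ ∑ u ∈ U, g3 u := by
      rw [hVdef, Finset.sum_image hinj]
      exact Finset.sum_le_sum fun u hu => g3_prim_le (hu0 u hu)
    have key : ∑ x ∈ T \ V, g3 x ≤ ∑ x ∈ V \ T, g3 x := by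
      have hcards : (T \ V).card = (V \ T).card := by
        have e1 := Finset.card_sdiff_add_card_inter T V
        have e2 := Finset.card_sdiff_add_card_inter V T
        rw [Finset.inter_comm] at e2
        omega
      rcases Finset.eq_empty_or_nonempty T with hTe | hTne
      · rw [hTe]
        simp only [Finset.empty_sdiff, Finset.sdiff_empty, Finset.sum_empty]
        exact Finset.sum_nonneg fun x _ => g3_nonneg x
      · have hne : (T.image g3).Nonempty := hTne.image g3
        set M := (T.image g3).max' hne with hMdef
        obtain ⟨vM, hvM, hvMe⟩ := Finset.mem_image.mp ((T.image g3).max'_mem hne)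
        have hMub : ∀ x ∈ T, g3 x ≤ M :=
          fun x hx => Finset.le_max' _ _ (Finset.mem_image_of_mem g3 hx)
        have hhigh : ∀ x ∈ V \ T, M ≤ g3 x := by
          intro x hx
          obtain ⟨hxV, hxT⟩ := Finset.mem_sdiff.mp hx
          by_contra h
          push_neg at h
          refine hxT (hsat.2 x (hVprim x hxV) ⟨vM, hvM, ?_⟩)
          rw [gaugeZ_eq, gaugeZ_eq]
          have hx' : g3 x < g3 vM := by rw [hvMe]; exact h
          exact_mod_cast hx'
        calc ∑ x ∈ T \ V, g3 x ≤ (T \ V).card • M :=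
              Finset.sum_le_card_nsmul _ _ _ fun x hx =>
                hMub x (Finset.mem_sdiff.mp hx).1
          _ = (V \ T).card • M := by rw [hcards]
          _ ≤ ∑ x ∈ V \ T, g3 x := Finset.card_nsmul_le_sum _ _ _ hhigh
    have eT := Finset.sum_sdiff (f := g3) (Finset.inter_subset_left (s₁ := T) (s₂ := V))
    have eV := Finset.sum_sdiff (f := g3) (Finset.inter_subset_left (s₁ := V) (s₂ := T))
    rw [Finset.sdiff_inter_self_left] at eT eV
    rw [Finset.inter_comm] at eV
    calc ∑ x ∈ T, g3 x ≤ ∑ x ∈ V, g3 x := by omega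
      _ ≤ ∑ u ∈ U, g3 u := hUV
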